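/- Let c > 0, α > 0, and let v₁ ≠ 0 and v₂ ≠ 0 be real numbers. Then there exists no real number u such that both s(2cv₁) = s(2uv₁) and s(−2αcv₂) = s(2uv₂). (This is the paper's core observation that no single inverse temperature u = 1/T can simultaneously calibrate the inlier region, which requires u = c = θ̂ᵀθ*/(σ²‖θ̂‖²), and the outlier region, which requires u = −αc.) -/

import Mathlib

/-- The logistic sigmoid function. -/
noncomputable def sig (t : ℝ) : ℝ := 1 / (1 + Real.exp (-t))

lemma sig_inj : Function.Injective sig := by
  intro a b h
  unfold sig at h
  have ha : (0:ℝ) < 1 + Real.exp (-a) := by positivity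
  have hb : (0:ℝ) < 1 + Real.exp (-b) := by positivity
  field_simp at h
  simpa using h.symm

/-- No single inverse temperature `u` can simultaneously calibrate the inlier
region (which requires `u = c`) and the outlier region (which requires
`u = −αc`). -/
theorem stmt2 (c α v₁ v₂ : ℝ) (hc : 0 < c) (hα : 0 < α) (hv₁ : v₁ ≠ 0) (hv₂ : v₂ ≠ 0) :
    ¬ ∃ u : ℝ, sig (2 * c * v₁) = sig (2 * u * v₁) ∧
      sig (-2 * α * c * v₂) = sig (2 * u * v₂) := by
  rintro ⟨u, h1, h2⟩
  have e1 := sig_inj h1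
  have e2 := sig_inj h2
  have hu1 : u = c := by
    have := mul_right_cancel₀ hv₁ e1; linarith
  have hu2 : u = -α * c := by
    have := mul_right_cancel₀ hv₂ e2; linarith
  nlinarith
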